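/- Let G be a finite group and fix an element g ∈ G. The number of elements x ∈ G such that x^n = g is divisible by gcd(n, |C_G(g)|), where C_G(g) is the centralizer of g (Frobenius-type theorem in the cyclic-equation special case g = 1 and G abelian: the number of x with x^n = 1 is divisible by gcd(n, |G|)). -/
import Mathlib

theorem stmt_6 (G : Type*) [CommGroup G] [Fintype G] (n : ℕ) (hn : 0 < n) :
    Nat.gcd n (Nat.card G) ∣ Nat.card {x : G // x ^ n = 1} := by
  set H : Subgroup G := (powMonoidHom n : G →* G).ker with hH
  have hcard : Nat.card {x : G // x ^ n = 1} = Nat.card H := by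
    congr 1
  rw [hcard]
  set d := Nat.gcd n (Nat.card G) with hd
  have hd0 : d ≠ 0 := Nat.gcd_ne_zero_left hn.ne'
  have hH0 : Nat.card H ≠ 0 := Nat.card_pos.ne'
  rw [← Nat.factorization_le_iff_dvd hd0 hH0]
  intro p
  by_cases hp : p.Prime
  · haveI : Fact p.Prime := ⟨hp⟩
    set k := d.factorization p with hk
    have hpk_d : p ^ k ∣ d := Nat.ordProj_dvd d p
    have hpk_G : p ^ k ∣ Nat.card G := hpk_d.trans (Nat.gcd_dvd_right _ _)
    obtain ⟨K, hK⟩ := Sylow.exists_subgroup_card_pow_prime p hpk_G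
    have hKH : K ≤ H := by
      intro x hx
      have hord : orderOf x ∣ p ^ k := by
        rw [← hK]
        exact K.orderOf_dvd_natCard hx
      have : x ^ n = 1 := by
        apply orderOf_dvd_iff_pow_eq_one.mp
        exact hord.trans (hpk_d.trans (Nat.gcd_dvd_left _ _))
      exact this
    have : p ^ k ∣ Nat.card H := hK ▸ Subgroup.card_dvd_of_le hKH
    exact (Nat.Prime.pow_dvd_iff_le_factorization hp hH0).mp this
  · simp [Nat.factorization_eq_zero_of_not_prime _ hp]
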